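/- If an exact functor F : 𝒞 → 𝒟 between triangulated categories closed under small coproducts commutes with arbitrary coproducts, then for any class C′ ⊂ Ob 𝒞 the image under F of the big extension-closure of C′ is contained in the big extension-closure of F(C′) in 𝒟. -/

import Mathlib

open CategoryTheory CategoryTheory.Limits CategoryTheory.Pretriangulated ZeroObject

universe v u u₂

variable {C : Type u} [Category.{v} C] [Preadditive C] [HasZeroObject C]
  [HasShift C ℤ] [∀ n : ℤ, (shiftFunctor C n).Additive] [Pretriangulated C]

/-- The map `⊕ 1 − ⊕ φᵢ : ∐ Yᵢ ⟶ ∐ Yᵢ` whose cone is the homotopy colimit. -/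
noncomputable def hocolimMap (Y : ℕ → C) (φ : ∀ i, Y i ⟶ Y (i + 1)) [HasCoproduct Y] :
    (∐ Y) ⟶ ∐ Y :=
  Sigma.desc fun i => Sigma.ι Y i - φ i ≫ Sigma.ι Y (i + 1)

/-- `H` is a homotopy colimit of the sequence `(Y, φ)` if it is a cone of `hocolimMap Y φ`. -/
def IsHocolim (Y : ℕ → C) (φ : ∀ i, Y i ⟶ Y (i + 1)) [HasCoproduct Y] (H : C) : Prop :=
  ∃ (ι' : (∐ Y) ⟶ H) (π : H ⟶ (∐ Y)⟦(1 : ℤ)⟧),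
    Triangle.mk (hocolimMap Y φ) ι' π ∈ distTriang C

/-- `Z` is a cone of the morphism `f`. -/
def IsConeOf {A B : C} (f : A ⟶ B) (Z : C) : Prop :=
  ∃ (g : B ⟶ Z) (h : Z ⟶ A⟦(1 : ℤ)⟧), Triangle.mk f g h ∈ distTriang C

/-- A class of objects is strongly extension-closed if it contains `0` and contains all
homotopy colimits of sequences whose first term and all cones of connecting maps lie
in the class. -/
def IsStronglyExtClosed [HasCountableCoproducts C] (P : Set C) : Prop :=
  (0 : C) ∈ P ∧
    ∀ (Y : ℕ → C) (φ : ∀ i, Y i ⟶ Y (i + 1)) (H : C), IsHocolim Y φ H →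
      Y 0 ∈ P → (∀ i, ∃ Z, IsConeOf (φ i) Z ∧ Z ∈ P) → H ∈ P

/-- `X` is a retract of `Y`. -/
def IsRetractOf (X Y : C) : Prop :=
  ∃ (i : X ⟶ Y) (r : Y ⟶ X), i ≫ r = 𝟙 X

/-- A class of objects is closed under retracts. -/
def IsRetractClosed (P : Set C) : Prop :=
  ∀ X Y : C, IsRetractOf X Y → Y ∈ P → X ∈ P

/-- A class of objects is closed under arbitrary small coproducts. -/
def IsCoprodClosed [HasCoproducts.{v} C] (P : Set C) : Prop :=
  ∀ (ι : Type v) (Z : ι → C), (∀ i, Z i ∈ P) → (∐ Z) ∈ P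

/-- The big extension-closure of a class `C'`: the smallest strongly extension-closed,
retract-closed class containing `C'` and closed under arbitrary small coproducts. -/
def bigExtClosure [HasCoproducts.{v} C] (C' : Set C) : Set C :=
  ⋂₀ {P : Set C | C' ⊆ P ∧ IsStronglyExtClosed P ∧ IsRetractClosed P ∧ IsCoprodClosed P}

section Aux

variable [HasCoproducts.{v} C]

lemma bigExtClosure_subset (C' : Set C) : C' ⊆ bigExtClosure C' :=
  fun _ hx P hP => hP.1 hx

lemma bigExtClosure_stronglyExtClosed (C' : Set C) :
    IsStronglyExtClosed (bigExtClosure C') := by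
  constructor
  · intro P hP
    exact hP.2.1.1
  · intro Y φ H hH h0 hc P hP
    exact hP.2.1.2 Y φ H hH (h0 P hP)
      (fun i => (hc i).elim (fun Z hZ => ⟨Z, hZ.1, hZ.2 P hP⟩))

lemma bigExtClosure_retractClosed (C' : Set C) :
    IsRetractClosed (bigExtClosure C') :=
  fun X Y hXY hY P hP => hP.2.2.1 X Y hXY (hY P hP)

lemma bigExtClosure_coprodClosed (C' : Set C) :
    IsCoprodClosed (bigExtClosure C') :=
  fun ι Z hZ P hP => hP.2.2.2 ι Z (fun i => hZ i P hP)

lemma bigExtClosure_iso_closed (C' : Set C) {X Y : C} (e : X ≅ Y)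
    (hY : Y ∈ bigExtClosure C') : X ∈ bigExtClosure C' :=
  bigExtClosure_retractClosed C' X Y ⟨e.hom, e.inv, e.hom_inv_id⟩ hY

/-- An exact coproduct-preserving functor sends homotopy colimits to homotopy colimits. -/
lemma isHocolim_map {D : Type u₂} [Category.{v} D] [Preadditive D] [HasZeroObject D]
    [HasShift D ℤ] [∀ n : ℤ, (shiftFunctor D n).Additive] [Pretriangulated D]
    [HasCoproducts.{v} D]
    (F : C ⥤ D) [F.CommShift ℤ] [F.IsTriangulated]
    [PreservesColimitsOfShape (Discrete ℕ) F]
    (Y : ℕ → C) (φ : ∀ i, Y i ⟶ Y (i + 1)) (H : C) (h : IsHocolim Y φ H) :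
    IsHocolim (fun i => F.obj (Y i)) (fun i => F.map (φ i)) (F.obj H) := by
  obtain ⟨ι', π, hT⟩ := h
  let e : (∐ fun i => F.obj (Y i)) ≅ F.obj (∐ Y) := asIso (sigmaComparison F Y)
  have hι : ∀ j, Sigma.ι (fun i => F.obj (Y i)) j ≫ e.hom = F.map (Sigma.ι Y j) :=
    fun j => ι_comp_sigmaComparison F Y j
  have hcomm : hocolimMap (fun i => F.obj (Y i)) (fun i => F.map (φ i)) ≫ e.hom =
      e.hom ≫ F.map (hocolimMap Y φ) := by
    apply Sigma.hom_ext
    intro j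
    simp only [hocolimMap]
    rw [← Category.assoc, Sigma.ι_desc, ← Category.assoc, hι, ← F.map_comp, Sigma.ι_desc]
    simp [Preadditive.sub_comp, F.map_sub, F.map_comp, hι]
  refine ⟨e.hom ≫ F.map ι',
    F.map π ≫ (F.commShiftIso (1 : ℤ)).hom.app (∐ Y) ≫ (shiftFunctor D (1 : ℤ)).map e.inv, ?_⟩
  refine isomorphic_distinguished _ (F.map_distinguished _ hT) _ ?_
  refine Triangle.isoMk _ _ e e (Iso.refl _) hcomm ?_ ?_
  · simp [Functor.mapTriangle]
    erw [Category.comp_id]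
    rfl
  · have key : (F.map π ≫ (F.commShiftIso (1 : ℤ)).hom.app (∐ Y) ≫
        (shiftFunctor D (1 : ℤ)).map e.inv) ≫ (shiftFunctor D (1 : ℤ)).map e.hom =
        F.map π ≫ (F.commShiftIso (1 : ℤ)).hom.app (∐ Y) := by
      simp only [Category.assoc, ← Functor.map_comp, Iso.inv_hom_id, Functor.map_id,
        Category.comp_id]
      simp
    exact key.trans (Category.id_comp _).symm

end Aux

/-- If an exact functor `F : C ⥤ D` between triangulated categories closed under small
coproducts commutes with arbitrary coproducts, then the image under `F` of the big
extension-closure of a class `C'` is contained in the big extension-closure of `F(C')`. -/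
theorem stmt9 [HasCoproducts.{v} C]
    {D : Type u₂} [Category.{v} D] [Preadditive D] [HasZeroObject D]
    [HasShift D ℤ] [∀ n : ℤ, (shiftFunctor D n).Additive] [Pretriangulated D]
    [HasCoproducts.{v} D]
    (F : C ⥤ D) [F.CommShift ℤ] [F.IsTriangulated]
    (hF : ∀ ι : Type v, PreservesColimitsOfShape (Discrete ι) F)
    (hF' : PreservesColimitsOfShape (Discrete ℕ) F)
    (C' : Set C) :
    ∀ X ∈ bigExtClosure C', F.obj X ∈ bigExtClosure (F.obj '' C') := by
  haveI := hF'
  intro X hX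
  refine hX {W : C | F.obj W ∈ bigExtClosure (F.obj '' C')} ⟨?_, ⟨?_, ?_⟩, ?_, ?_⟩
  · intro x hx
    exact bigExtClosure_subset _ ⟨x, hx, rfl⟩
  · -- zero
    have hz : IsZero (F.obj (0 : C)) := F.map_isZero (isZero_zero C)
    exact bigExtClosure_iso_closed _ (hz.iso (isZero_zero D))
      (bigExtClosure_stronglyExtClosed _).1
  · -- hocolim
    intro Y φ H hH h0 hc
    refine (bigExtClosure_stronglyExtClosed _).2 (fun i => F.obj (Y i))
      (fun i => F.map (φ i)) (F.obj H) (isHocolim_map F Y φ H hH) h0 ?_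
    intro i
    obtain ⟨Z, ⟨g, hmap, hdist⟩, hZ⟩ := hc i
    exact ⟨F.obj Z, ⟨F.map g, F.map hmap ≫ (F.commShiftIso (1 : ℤ)).hom.app _,
      F.map_distinguished _ hdist⟩, hZ⟩
  · -- retract
    intro A B hAB hB
    obtain ⟨i, r, hir⟩ := hAB
    exact bigExtClosure_retractClosed _ _ _
      ⟨F.map i, F.map r, by rw [← F.map_comp, hir, F.map_id]⟩ hB
  · -- coproducts
    intro ι Z hZ
    haveI := hF ι
    exact bigExtClosure_iso_closed _ (asIso (sigmaComparison F Z)).symm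
      (bigExtClosure_coprodClosed _ ι _ hZ)
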